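/- The 48 triangular lattice points in a closed (3,4)-equiangular hexagon form a 19-distance set whose squared distance set contains 49 but not 48; in particular, its 19 distances are not the 19 smallest distances occurring in the triangular lattice. -/

import Mathlib

/-- Triangular lattice point a•(1,0) + b•(1/2, √3/2). -/
noncomputable def tri (a b : ℤ) : ℝ × ℝ :=
  ((a : ℝ) + (b : ℝ) / 2, (b : ℝ) * Real.sqrt 3 / 2)

/-- Squared Euclidean distance in the plane. -/
def sqd (p q : ℝ × ℝ) : ℝ := (p.1 - q.1) ^ 2 + (p.2 - q.2) ^ 2

/-- The triangular lattice. -/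
noncomputable def triLattice : Set (ℝ × ℝ) := {p | ∃ a b : ℤ, p = tri a b}

/-- Closed regular hexagon of side `k` centered at the origin with a vertex at `(k,0)`. -/
noncomputable def hexR (k : ℤ) : Set (ℝ × ℝ) :=
  convexHull ℝ ({tri k 0, tri 0 k, tri (-k) k, tri (-k) 0, tri 0 (-k), tri k (-k)} : Set (ℝ × ℝ))

/-- Closed (k, k+1)-equiangular hexagon with vertices at lattice points. -/
noncomputable def hexE (k : ℤ) : Set (ℝ × ℝ) :=
  convexHull ℝ ({tri k 0, tri k (k+1), tri 0 (2*k+1), tri (-(k+1)) (2*k+1),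
    tri (-(k+1)) (k+1), tri 0 0} : Set (ℝ × ℝ))

/-- Set of squared distances between distinct points of `X`. -/
def sqdSet (X : Set (ℝ × ℝ)) : Set ℝ := {d | ∃ p ∈ X, ∃ q ∈ X, p ≠ q ∧ d = sqd p q}

-- linear map (a,b) ↦ a(1,0)+b(1/2,√3/2)
noncomputable def gmap : (ℝ × ℝ) →ₗ[ℝ] ℝ × ℝ where
  toFun p := (p.1 + p.2 / 2, p.2 * Real.sqrt 3 / 2)
  map_add' p q := by simp [Prod.ext_iff]; constructor <;> ring
  map_smul' c p := by simp [Prod.ext_iff]; constructor <;> ring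

lemma gmap_inj : Function.Injective gmap := by
  intro p q h
  have h3 : Real.sqrt 3 ≠ 0 := by positivity
  simp only [gmap, LinearMap.coe_mk, AddHom.coe_mk, Prod.ext_iff] at h ⊢
  obtain ⟨h1, h2⟩ := h
  have h2' : p.2 = q.2 := by
    have : p.2 * Real.sqrt 3 = q.2 * Real.sqrt 3 := by linarith
    exact mul_right_cancel₀ h3 this
  exact ⟨by linarith, h2'⟩

def H₆ : Set (ℝ × ℝ) := {(3,0), (3,4), (0,7), (-4,7), (-4,4), (0,0)}

def Reg : Set (ℝ × ℝ) := {p | 0 ≤ p.2 ∧ p.2 ≤ 7 ∧ -4 ≤ p.1 ∧ p.1 ≤ 3 ∧ 0 ≤ p.1 + p.2 ∧ p.1 + p.2 ≤ 7}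

lemma convex_Reg : Convex ℝ Reg := by
  intro p hp q hq a b ha hb hab
  obtain ⟨h1, h2, h3, h4, h5, h6⟩ := hp
  obtain ⟨k1, k2, k3, k4, k5, k6⟩ := hq
  refine ⟨?_, ?_, ?_, ?_, ?_, ?_⟩ <;>
    simp only [Prod.fst_add, Prod.snd_add, Prod.smul_fst, Prod.smul_snd, smul_eq_mul] <;>
    nlinarith

lemma hull_sub_Reg : convexHull ℝ H₆ ⊆ Reg := by
  apply convexHull_min _ convex_Reg
  intro p hp
  simp only [H₆, Set.mem_insert_iff, Set.mem_singleton_iff] at hp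
  rcases hp with h | h | h | h | h | h <;> subst h <;> norm_num [Reg]

lemma Reg_sub_hull : Reg ⊆ convexHull ℝ H₆ := by
  intro p hp
  obtain ⟨h1, h2, h3, h4, h5, h6⟩ := hp
  have hc := convex_convexHull ℝ H₆
  have hv : ∀ v ∈ H₆, v ∈ convexHull ℝ H₆ := fun v hv => subset_convexHull ℝ H₆ hv
  by_cases hy : p.2 ≤ 4
  · -- L = (-p.2, p.2) on segment (0,0)-(-4,4), R = (3,p.2) on segment (3,0)-(3,4)
    have hL : ((-p.2, p.2) : ℝ × ℝ) ∈ convexHull ℝ H₆ := by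
      refine hc.segment_subset (hv (0,0) (by simp [H₆])) (hv (-4,4) (by simp [H₆])) ?_
      exact ⟨1 - p.2/4, p.2/4, by linarith, by linarith, by ring,
        by simp only [Prod.smul_mk, Prod.mk_add_mk, smul_eq_mul, Prod.mk.injEq]
           constructor <;> ring⟩
    have hR : ((3, p.2) : ℝ × ℝ) ∈ convexHull ℝ H₆ := by
      refine hc.segment_subset (hv (3,0) (by simp [H₆])) (hv (3,4) (by simp [H₆])) ?_
      exact ⟨1 - p.2/4, p.2/4, by linarith, by linarith, by ring,
        by simp only [Prod.smul_mk, Prod.mk_add_mk, smul_eq_mul, Prod.mk.injEq]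
           constructor <;> ring⟩
    refine hc.segment_subset hL hR ?_
    have hd : (0:ℝ) < 3 + p.2 := by linarith
    refine ⟨(3 - p.1)/(3 + p.2), (p.1 + p.2)/(3 + p.2),
      by apply div_nonneg <;> linarith, by apply div_nonneg <;> linarith,
      by field_simp; ring, ?_⟩
    have hp12 : p = (p.1, p.2) := rfl
    rw [hp12]
    simp only [Prod.smul_mk, Prod.mk_add_mk, smul_eq_mul, Prod.mk.injEq]
    constructor <;> field_simp <;> ring
  · push_neg at hy
    have hL : ((-4, p.2) : ℝ × ℝ) ∈ convexHull ℝ H₆ := by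
      refine hc.segment_subset (hv (-4,4) (by simp [H₆])) (hv (-4,7) (by simp [H₆])) ?_
      exact ⟨1 - (p.2-4)/3, (p.2-4)/3, by linarith, by linarith, by ring,
        by simp only [Prod.smul_mk, Prod.mk_add_mk, smul_eq_mul, Prod.mk.injEq]
           constructor <;> ring⟩
    have hR : ((7 - p.2, p.2) : ℝ × ℝ) ∈ convexHull ℝ H₆ := by
      refine hc.segment_subset (hv (3,4) (by simp [H₆])) (hv (0,7) (by simp [H₆])) ?_
      exact ⟨1 - (p.2-4)/3, (p.2-4)/3, by linarith, by linarith, by ring,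
        by simp only [Prod.smul_mk, Prod.mk_add_mk, smul_eq_mul, Prod.mk.injEq]
           constructor <;> ring⟩
    refine hc.segment_subset hL hR ?_
    have hd : (0:ℝ) < 11 - p.2 := by linarith
    refine ⟨(7 - p.2 - p.1)/(11 - p.2), (p.1 + 4)/(11 - p.2),
      by apply div_nonneg <;> linarith, by apply div_nonneg <;> linarith,
      by field_simp; ring, ?_⟩
    have hp12 : p = (p.1, p.2) := rfl
    rw [hp12]
    simp only [Prod.smul_mk, Prod.mk_add_mk, smul_eq_mul, Prod.mk.injEq]
    constructor <;> field_simp <;> ring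

lemma Reg_iff (a b : ℤ) : ((a:ℝ),(b:ℝ)) ∈ Reg ↔
    (0 ≤ b ∧ b ≤ 7 ∧ -4 ≤ a ∧ a ≤ 3 ∧ 0 ≤ a + b ∧ a + b ≤ 7) := by
  show ((0:ℝ) ≤ (b:ℝ) ∧ (b:ℝ) ≤ 7 ∧ -4 ≤ (a:ℝ) ∧ (a:ℝ) ≤ 3 ∧
    (0:ℝ) ≤ (a:ℝ)+(b:ℝ) ∧ (a:ℝ)+(b:ℝ) ≤ 7) ↔ _
  norm_cast

lemma hexE3_eq : hexE 3 = gmap '' convexHull ℝ H₆ := by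
  rw [LinearMap.image_convexHull]
  unfold hexE
  norm_num
  congr 1
  have ht : ∀ a b : ℤ, tri a b = gmap ((a:ℝ), (b:ℝ)) := by
    intro a b; simp [tri, gmap]
  rw [show (gmap '' H₆ : Set (ℝ×ℝ)) = _ from rfl]
  simp only [H₆, Set.image_insert_eq, Set.image_singleton]
  rw [ht 3 0, ht 3 4, ht 0 7, ht (-4) 7, ht (-4) 4, ht 0 0]
  norm_num

lemma mem_hexE3 (a b : ℤ) : tri a b ∈ hexE 3 ↔
    (0 ≤ b ∧ b ≤ 7 ∧ -4 ≤ a ∧ a ≤ 3 ∧ 0 ≤ a + b ∧ a + b ≤ 7) := by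
  rw [hexE3_eq]
  have ht : tri a b = gmap ((a:ℝ), (b:ℝ)) := by simp [tri, gmap]
  rw [ht]
  rw [gmap_inj.mem_set_image]
  rw [← Reg_iff a b]
  exact ⟨fun h => hull_sub_Reg h, fun h => Reg_sub_hull h⟩

noncomputable def S : Finset (ℤ × ℤ) :=
  ((Finset.Icc (-4 : ℤ) 3) ×ˢ (Finset.Icc (0 : ℤ) 7)).filter
    (fun p => 0 ≤ p.1 + p.2 ∧ p.1 + p.2 ≤ 7)

def Qf (p q : ℤ × ℤ) : ℤ :=
  (p.1 - q.1) ^ 2 + (p.1 - q.1) * (p.2 - q.2) + (p.2 - q.2) ^ 2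

def T : Finset ℤ := {1, 3, 4, 7, 9, 12, 13, 16, 19, 21, 25, 27, 28, 31, 36, 37, 39, 43, 49}

lemma triInj : Function.Injective (fun p : ℤ × ℤ => tri p.1 p.2) := by
  intro p q h
  have h3 : Real.sqrt 3 ≠ 0 := by positivity
  simp only [tri, Prod.ext_iff] at h
  obtain ⟨h1, h2⟩ := h
  have hb : (p.2 : ℝ) = q.2 := by
    have : (p.2 : ℝ) * Real.sqrt 3 = (q.2 : ℝ) * Real.sqrt 3 := by linarith
    exact mul_right_cancel₀ h3 this
  have hb' : p.2 = q.2 := by exact_mod_cast hb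
  have ha' : p.1 = q.1 := by
    have : (p.1 : ℝ) = q.1 := by rw [hb] at h1; linarith
    exact_mod_cast this
  exact Prod.ext ha' hb'

lemma sqd_tri (a b c d : ℤ) :
    sqd (tri a b) (tri c d) = ((Qf (a, b) (c, d) : ℤ) : ℝ) := by
  have h3 : Real.sqrt 3 ^ 2 = 3 := Real.sq_sqrt (by norm_num)
  simp only [sqd, tri, Qf]
  push_cast
  linear_combination (((b : ℝ) - d) ^ 2 / 4) * h3

lemma key_set : triLattice ∩ hexE 3 = (fun p : ℤ × ℤ => tri p.1 p.2) '' ↑S := by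
  ext p
  constructor
  · rintro ⟨⟨a, b, rfl⟩, hp⟩
    refine ⟨(a, b), ?_, rfl⟩
    rw [mem_hexE3] at hp
    obtain ⟨h1, h2, h3, h4, h5, h6⟩ := hp
    simp only [S, Finset.coe_filter, Finset.mem_product, Finset.mem_Icc, Set.mem_setOf_eq]
    exact ⟨⟨⟨h3, h4⟩, h1, h2⟩, h5, h6⟩
  · rintro ⟨⟨a, b⟩, hab, rfl⟩
    simp only [S, Finset.coe_filter, Finset.mem_product, Finset.mem_Icc, Set.mem_setOf_eq] at hab
    obtain ⟨⟨⟨h3, h4⟩, h1, h2⟩, h5, h6⟩ := hab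
    exact ⟨⟨a, b, rfl⟩, (mem_hexE3 a b).2 ⟨h1, h2, h3, h4, h5, h6⟩⟩

lemma closureT : ∀ p ∈ S, ∀ q ∈ S, p ≠ q → Qf p q ∈ T := by decide

def W : List ((ℤ × ℤ) × (ℤ × ℤ)) :=
  [((1,0),(0,0)), ((1,1),(0,0)), ((2,0),(0,0)), ((2,1),(0,0)), ((3,0),(0,0)),
   ((2,2),(0,0)), ((3,1),(0,0)), ((0,4),(0,0)), ((3,2),(0,0)), ((0,5),(-4,4)),
   ((0,5),(0,0)), ((3,3),(0,0)), ((0,6),(-4,4)), ((1,5),(0,0)), ((0,6),(0,0)),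
   ((3,4),(0,0)), ((2,5),(0,0)), ((1,6),(0,0)), ((0,7),(0,0))]

lemma achieveT : ∀ t ∈ T, ∃ w ∈ W, w.1 ∈ S ∧ w.2 ∈ S ∧ w.1 ≠ w.2 ∧ Qf w.1 w.2 = t := by
  decide

lemma sqdSet_eq : sqdSet (triLattice ∩ hexE 3) = (fun n : ℤ => (n : ℝ)) '' ↑T := by
  rw [key_set]
  ext d
  constructor
  · rintro ⟨p, ⟨⟨a, b⟩, ha, rfl⟩, q, ⟨⟨c, e⟩, hc, rfl⟩, hne, rfl⟩
    have hne' : ((a, b) : ℤ × ℤ) ≠ (c, e) := fun h => hne (by rw [h])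
    refine ⟨Qf (a, b) (c, e), closureT _ ha _ hc hne', (sqd_tri a b c e).symm⟩
  · rintro ⟨n, hn, rfl⟩
    obtain ⟨w, _, hw1, hw2, hwne, hwq⟩ := achieveT n hn
    refine ⟨tri w.1.1 w.1.2, ⟨w.1, hw1, rfl⟩, tri w.2.1 w.2.2, ⟨w.2, hw2, rfl⟩,
      fun h => hwne (triInj (by simpa using h)), ?_⟩
    rw [sqd_tri, hwq]

theorem equiangular_3_4_hexagon_nineteen_distance :
    (triLattice ∩ hexE 3).ncard = 48 ∧
      (sqdSet (triLattice ∩ hexE 3)).ncard = 19 ∧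
      (49 : ℝ) ∈ sqdSet (triLattice ∩ hexE 3) ∧
      (48 : ℝ) ∉ sqdSet (triLattice ∩ hexE 3) := by
  refine ⟨?_, ?_, ?_, ?_⟩
  · rw [key_set, Set.ncard_image_of_injective _ triInj, Set.ncard_coe_finset]
    decide
  · rw [sqdSet_eq, Set.ncard_image_of_injective _ (fun x y h => by exact_mod_cast h),
      Set.ncard_coe_finset]
    decide
  · rw [sqdSet_eq]
    exact ⟨49, by decide, by norm_num⟩
  · rw [sqdSet_eq]
    rintro ⟨n, hn, hcast⟩
    have hc2 : ((n : ℝ)) = 48 := hcast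
    have : n = 48 := by exact_mod_cast hc2
    subst this
    revert hn
    decide
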